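/- Let G be a finite abstract simplicial complex with Hodge Laplacian L = D², where D is the Dirac matrix. Let f_k denote the number of elements of G of cardinality k+1, and let b_k denote the dimension of the kernel of the k-form block L_k of L (the block of L indexed by the elements of cardinality k+1). Then the Euler–Poincaré formula holds: Σ_k (−1)^k f_k = Σ_k (−1)^k b_k. -/
import Mathlib

open Matrix

/-- A finite abstract simplicial complex: a finite collection of nonempty finite
subsets of the totally ordered vertex set `ℕ`, closed under taking nonempty subsets. -/
def IsComplex (G : Finset (Finset ℕ)) : Prop :=
  (∀ x ∈ G, x.Nonempty) ∧ ∀ x ∈ G, ∀ y ⊆ x, y.Nonempty → y ∈ G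

/-- Entry of the exterior derivative: `(-1)^i` if `y ⊂ x`, `|x| = |y| + 1`, and the
unique vertex of `x \ y` sits at position `i` (0-based) in the increasing enumeration
of `x`; `0` otherwise.  (The sum over the singleton `x \ y` extracts that position.) -/
noncomputable def dEntry (x y : Finset ℕ) : ℝ :=
  if y ⊆ x ∧ x.card = y.card + 1 then
    (-1 : ℝ) ^ ((x \ y).sum fun v => (x.filter (fun w => w < v)).card)
  else 0

/-- The exterior derivative of a complex, as a matrix indexed by the simplices. -/
noncomputable def extDer (G : Finset (Finset ℕ)) :
    Matrix {x // x ∈ G} {x // x ∈ G} ℝ :=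
  Matrix.of fun x y => dEntry x.1 y.1

/-- The Dirac matrix `D = d + dᵀ`. -/
noncomputable def dirac (G : Finset (Finset ℕ)) :
    Matrix {x // x ∈ G} {x // x ∈ G} ℝ :=
  extDer G + (extDer G)ᵀ

/-- The Hodge Laplacian `L = D²`. -/
noncomputable def hodge (G : Finset (Finset ℕ)) :
    Matrix {x // x ∈ G} {x // x ∈ G} ℝ :=
  dirac G * dirac G

/-- The ascending list of eigenvalues (with multiplicity) of a real symmetric matrix. -/
noncomputable def sortedEigs {m : Type*} [Fintype m] [DecidableEq m]
    (A : Matrix m m ℝ) : List ℝ :=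
  if h : A.IsHermitian then (Finset.univ.val.map h.eigenvalues).sort (· ≤ ·) else []

/-- The `k`-form block of the Hodge Laplacian: the submatrix of `L` indexed by the
simplices of cardinality `k + 1`. -/
noncomputable def formBlock (G : Finset (Finset ℕ)) (k : ℕ) :
    Matrix {x // x ∈ G.filter fun s => s.card = k + 1}
           {x // x ∈ G.filter fun s => s.card = k + 1} ℝ :=
  Matrix.of fun x y =>
    hodge G ⟨x.1, (Finset.mem_filter.mp x.2).1⟩ ⟨y.1, (Finset.mem_filter.mp y.2).1⟩

/-- `f_k`: the number of simplices of cardinality `k + 1`. -/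
def fVec (G : Finset (Finset ℕ)) (k : ℕ) : ℕ :=
  (G.filter fun s => s.card = k + 1).card

/-- `b_k`: the dimension of the kernel of the `k`-form block of the Hodge Laplacian. -/
noncomputable def bVec (G : Finset (Finset ℕ)) (k : ℕ) : ℕ :=
  Module.finrank ℝ (LinearMap.ker (formBlock G k).mulVecLin)

lemma dEntry_ne_zero {x y : Finset ℕ} (h : dEntry x y ≠ 0) :
    y ⊆ x ∧ x.card = y.card + 1 := by
  by_contra hc
  exact h (if_neg hc)

lemma dEntry_erase {x : Finset ℕ} {a : ℕ} (ha : a ∈ x) :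
    dEntry x (x.erase a) = (-1 : ℝ) ^ ((x.filter (fun w => w < a)).card) := by
  have hcond : x.erase a ⊆ x ∧ x.card = (x.erase a).card + 1 :=
    ⟨Finset.erase_subset a x, by
      rw [Finset.card_erase_of_mem ha]
      have := Finset.card_pos.mpr ⟨a, ha⟩
      omega⟩
  rw [dEntry, if_pos hcond, Finset.sdiff_erase_self ha, Finset.sum_singleton]

lemma dEntry_cancel {x : Finset ℕ} {a b : ℕ} (ha : a ∈ x) (hb : b ∈ x)
    (hab : a < b) :
    dEntry x (x.erase a) * dEntry (x.erase a) ((x.erase a).erase b)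
      + dEntry x (x.erase b) * dEntry (x.erase b) ((x.erase b).erase a) = 0 := by
  have hba : b ∈ x.erase a := Finset.mem_erase.mpr ⟨hab.ne', hb⟩
  have hab' : a ∈ x.erase b := Finset.mem_erase.mpr ⟨hab.ne, ha⟩
  rw [dEntry_erase hba, dEntry_erase hab', dEntry_erase ha, dEntry_erase hb]
  have h1 : ((x.erase a).filter (fun w => w < b)).card
      = (x.filter (fun w => w < b)).card - 1 := by
    rw [Finset.filter_erase]
    exact Finset.card_erase_of_mem (Finset.mem_filter.mpr ⟨ha, hab⟩)
  have h2 : ((x.erase b).filter (fun w => w < a)).card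
      = (x.filter (fun w => w < a)).card := by
    rw [Finset.filter_erase, Finset.erase_eq_of_notMem]
    intro hbm
    have := (Finset.mem_filter.mp hbm).2
    omega
  have hpos : 1 ≤ (x.filter (fun w => w < b)).card :=
    Finset.card_pos.mpr ⟨a, Finset.mem_filter.mpr ⟨ha, hab⟩⟩
  obtain ⟨p, hp⟩ : ∃ p, (x.filter (fun w => w < b)).card = p + 1 :=
    ⟨_, (Nat.succ_pred_eq_of_pos hpos).symm⟩
  rw [h1, h2, hp]
  simp only [Nat.add_sub_cancel]
  rw [pow_succ]
  ring

lemma dEntry_cancel_z {x z : Finset ℕ} {a b : ℕ} (ha : a ∈ x) (hb : b ∈ x)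
    (hab : a < b) (hz : z = (x.erase a).erase b) :
    dEntry x (x.erase a) * dEntry (x.erase a) z
      + dEntry x (x.erase b) * dEntry (x.erase b) z = 0 := by
  have h2 : z = (x.erase b).erase a := by rw [hz, Finset.erase_right_comm]
  nth_rewrite 1 [hz]
  rw [h2]
  exact dEntry_cancel ha hb hab

lemma sum_cancel_aux {G : Finset (Finset ℕ)} (hG : IsComplex G) {x z : Finset ℕ}
    (hxG : x ∈ G) (hzx : z ⊆ x) {k : ℕ} (hxc : x.card = k + 3) (hzc : z.card = k + 1)
    {a b : ℕ} (hlt : a < b) (hxz : x \ z = {a, b}) :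
    ∑ y ∈ G.filter (fun s => s.card = k + 2), dEntry x y * dEntry y z = 0 := by
  have haz : a ∈ x \ z := hxz ▸ Finset.mem_insert_self a {b}
  have hbz : b ∈ x \ z := hxz ▸ Finset.mem_insert_of_mem (Finset.mem_singleton_self b)
  obtain ⟨ha, haz'⟩ := Finset.mem_sdiff.mp haz
  obtain ⟨hb, hbz'⟩ := Finset.mem_sdiff.mp hbz
  have hzeq : z = (x.erase a).erase b := by
    have h1 : x \ (x \ z) = z := Finset.sdiff_sdiff_eq_self hzx
    rw [← h1, hxz, Finset.sdiff_insert, Finset.erase_right_comm, ← Finset.erase_eq]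
  -- memberships of the two middle simplices
  have hcard1 : (x.erase a).card = k + 2 := by
    rw [Finset.card_erase_of_mem ha]; omega
  have hcard2 : (x.erase b).card = k + 2 := by
    rw [Finset.card_erase_of_mem hb]; omega
  have hy1G : x.erase a ∈ G :=
    hG.2 x hxG _ (Finset.erase_subset a x) (Finset.card_pos.mp (by omega))
  have hy2G : x.erase b ∈ G :=
    hG.2 x hxG _ (Finset.erase_subset b x) (Finset.card_pos.mp (by omega))
  have hm1 : x.erase a ∈ G.filter (fun s => s.card = k + 2) :=
    Finset.mem_filter.mpr ⟨hy1G, hcard1⟩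
  have hm2 : x.erase b ∈ G.filter (fun s => s.card = k + 2) :=
    Finset.mem_filter.mpr ⟨hy2G, hcard2⟩
  have hne : x.erase a ≠ x.erase b := by
    intro h
    have : a ∈ x.erase a := h ▸ Finset.mem_erase.mpr ⟨hlt.ne, ha⟩
    exact (Finset.notMem_erase a x) this
  rw [Finset.sum_eq_add_of_mem _ _ hm1 hm2 hne ?_]
  · exact dEntry_cancel_z ha hb hlt hzeq
  · intro y hy ⟨hne1, hne2⟩
    by_contra h
    obtain ⟨h1, h2⟩ := mul_ne_zero_iff.mp h
    obtain ⟨hyx, hcy⟩ := dEntry_ne_zero h1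
    obtain ⟨hzy, hcz⟩ := dEntry_ne_zero h2
    have hsd : (x \ y).card = 1 := by rw [Finset.card_sdiff_of_subset hyx]; omega
    obtain ⟨c, hc⟩ := Finset.card_eq_one.mp hsd
    have hyeq : y = x.erase c := by
      have h1' : x \ (x \ y) = y := Finset.sdiff_sdiff_eq_self hyx
      rw [← h1', hc, ← Finset.erase_eq]
    have hcmem : c ∈ x \ z := by
      have hcx : c ∈ x \ y := hc ▸ Finset.mem_singleton_self c
      obtain ⟨hcx', hcy'⟩ := Finset.mem_sdiff.mp hcx
      exact Finset.mem_sdiff.mpr ⟨hcx', fun hcz' => hcy' (hzy hcz')⟩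
    rw [hxz, Finset.mem_insert, Finset.mem_singleton] at hcmem
    rcases hcmem with rfl | rfl
    · exact hne1 hyeq
    · exact hne2 hyeq

noncomputable def Amat (G : Finset (Finset ℕ)) (k : ℕ) :
    Matrix {x // x ∈ G.filter fun s => s.card = (k + 1) + 1}
           {x // x ∈ G.filter fun s => s.card = k + 1} ℝ :=
  Matrix.of fun x y => dEntry x.1 y.1

lemma Amat_mul_Amat {G : Finset (Finset ℕ)} (hG : IsComplex G) (k : ℕ) :
    Amat G (k + 1) * Amat G k = 0 := by
  ext x z
  obtain ⟨hxG, hxc⟩ := Finset.mem_filter.mp x.2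
  obtain ⟨hzG, hzc⟩ := Finset.mem_filter.mp z.2
  rw [Matrix.mul_apply, Matrix.zero_apply]
  simp only [Amat, Matrix.of_apply]
  rw [Finset.sum_coe_sort (G.filter fun s => s.card = (k + 1) + 1)
    (fun y => dEntry x.1 y * dEntry y z.1)]
  by_cases hzx : z.1 ⊆ x.1
  · have hcd : (x.1 \ z.1).card = 2 := by
      rw [Finset.card_sdiff_of_subset hzx]; omega
    obtain ⟨a, b, hab, habs⟩ := Finset.card_eq_two.mp hcd
    have hxc' : x.1.card = k + 3 := by omega
    have hsum : ∑ y ∈ G.filter (fun s => s.card = k + 2), dEntry x.1 y * dEntry y z.1 = 0 := by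
      rcases lt_or_gt_of_ne hab with hlt | hlt
      · exact sum_cancel_aux hG hxG hzx hxc' hzc hlt habs
      · exact sum_cancel_aux hG hxG hzx hxc' hzc hlt (by rw [habs, Finset.pair_comm])
    convert hsum using 2
  · apply Finset.sum_eq_zero
    intro y hy
    by_contra h
    obtain ⟨h1, h2⟩ := mul_ne_zero_iff.mp h
    exact hzx (((dEntry_ne_zero h2).1).trans (dEntry_ne_zero h1).1)

lemma hodge_entry {G : Finset (Finset ℕ)} (hG : IsComplex G) {c : ℕ}
    {x y : Finset ℕ} (hx : x ∈ G) (hy : y ∈ G)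
    (hxc : x.card = c + 1) (hyc : y.card = c + 1) :
    hodge G ⟨x, hx⟩ ⟨y, hy⟩
      = (∑ z ∈ G.filter (fun s => s.card = c + 2), dEntry z x * dEntry z y)
        + ∑ z ∈ G.filter (fun s => s.card = c), dEntry x z * dEntry y z := by
  rw [hodge, Matrix.mul_apply]
  have hexp : ∀ z : {x // x ∈ G},
      dirac G ⟨x, hx⟩ z * dirac G z ⟨y, hy⟩
        = (dEntry x z.1 * dEntry z.1 y + dEntry x z.1 * dEntry y z.1)
          + (dEntry z.1 x * dEntry z.1 y + dEntry z.1 x * dEntry y z.1) := by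
    intro z
    simp only [dirac, extDer, Matrix.add_apply, Matrix.transpose_apply, Matrix.of_apply]
    ring
  rw [Finset.sum_congr rfl (fun z _ => hexp z)]
  simp only [Finset.sum_add_distrib]
  have e1 : ∑ z : {x // x ∈ G}, dEntry x z.1 * dEntry z.1 y = 0 := by
    apply Finset.sum_eq_zero
    intro z _
    by_contra h
    obtain ⟨h1, h2⟩ := mul_ne_zero_iff.mp h
    have c1 := (dEntry_ne_zero h1).2
    have c2 := (dEntry_ne_zero h2).2
    omega
  have e4 : ∑ z : {x // x ∈ G}, dEntry z.1 x * dEntry y z.1 = 0 := by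
    apply Finset.sum_eq_zero
    intro z _
    by_contra h
    obtain ⟨h1, h2⟩ := mul_ne_zero_iff.mp h
    have c1 := (dEntry_ne_zero h1).2
    have c2 := (dEntry_ne_zero h2).2
    omega
  rw [e1, e4]
  have e3 : ∑ z : {x // x ∈ G}, dEntry z.1 x * dEntry z.1 y
      = ∑ z ∈ G.filter (fun s => s.card = c + 2), dEntry z x * dEntry z y := by
    rw [Finset.sum_coe_sort G (fun z => dEntry z x * dEntry z y)]
    rw [Finset.sum_filter_of_ne]
    intro z _ h
    have c1 := (dEntry_ne_zero (mul_ne_zero_iff.mp h).1).2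
    omega
  have e2 : ∑ z : {x // x ∈ G}, dEntry x z.1 * dEntry y z.1
      = ∑ z ∈ G.filter (fun s => s.card = c), dEntry x z * dEntry y z := by
    rw [Finset.sum_coe_sort G (fun z => dEntry x z * dEntry y z)]
    rw [Finset.sum_filter_of_ne]
    intro z _ h
    have c1 := (dEntry_ne_zero (mul_ne_zero_iff.mp h).1).2
    omega
  rw [e2, e3]
  ring

lemma formBlock_succ {G : Finset (Finset ℕ)} (hG : IsComplex G) (k : ℕ) :
    formBlock G (k + 1)
      = (Amat G (k + 1))ᵀ * Amat G (k + 1) + Amat G k * (Amat G k)ᵀ := by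
  ext x y
  obtain ⟨hxG, hxc⟩ := Finset.mem_filter.mp x.2
  obtain ⟨hyG, hyc⟩ := Finset.mem_filter.mp y.2
  show hodge G ⟨x.1, hxG⟩ ⟨y.1, hyG⟩ = _
  rw [hodge_entry hG hxG hyG hxc hyc, Matrix.add_apply]
  congr 1
  · rw [Matrix.mul_apply]
    simp only [Amat, Matrix.transpose_apply, Matrix.of_apply]
    exact (Finset.sum_coe_sort (G.filter fun s => s.card = (k + 1 + 1) + 1)
      (fun z => dEntry z x.1 * dEntry z y.1)).symm
  · rw [Matrix.mul_apply]
    simp only [Amat, Matrix.transpose_apply, Matrix.of_apply]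
    exact (Finset.sum_coe_sort (G.filter fun s => s.card = k + 1)
      (fun z => dEntry x.1 z * dEntry y.1 z)).symm

lemma formBlock_zero {G : Finset (Finset ℕ)} (hG : IsComplex G) :
    formBlock G 0 = (Amat G 0)ᵀ * Amat G 0 := by
  ext x y
  obtain ⟨hxG, hxc⟩ := Finset.mem_filter.mp x.2
  obtain ⟨hyG, hyc⟩ := Finset.mem_filter.mp y.2
  show hodge G ⟨x.1, hxG⟩ ⟨y.1, hyG⟩ = _
  rw [hodge_entry hG hxG hyG hxc hyc]
  have e0 : ∑ z ∈ G.filter (fun s => s.card = 0), dEntry x.1 z * dEntry y.1 z = 0 := by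
    apply Finset.sum_eq_zero
    intro z hz
    obtain ⟨hzG, hzc⟩ := Finset.mem_filter.mp hz
    have := (hG.1 z hzG).card_pos
    omega
  rw [e0, add_zero, Matrix.mul_apply]
  simp only [Amat, Matrix.transpose_apply, Matrix.of_apply]
  exact (Finset.sum_coe_sort (G.filter fun s => s.card = (0 + 1) + 1)
    (fun z => dEntry z x.1 * dEntry z y.1)).symm

lemma dp_self_nonneg {ι : Type*} [Fintype ι] (v : ι → ℝ) : 0 ≤ v ⬝ᵥ v :=
  Finset.sum_nonneg fun i _ => mul_self_nonneg (v i)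

lemma ker_sum_psd {ι₁ ι₂ ι₃ : Type*} [Fintype ι₁] [Fintype ι₂] [Fintype ι₃]
    (A : Matrix ι₃ ι₂ ℝ) (B : Matrix ι₂ ι₁ ℝ) :
    LinearMap.ker (Aᵀ * A + B * Bᵀ).mulVecLin
      = LinearMap.ker A.mulVecLin ⊓ LinearMap.ker B.transpose.mulVecLin := by
  ext v
  simp only [LinearMap.mem_ker, Submodule.mem_inf, Matrix.mulVecLin_apply]
  constructor
  · intro h
    have h0 : v ⬝ᵥ (Aᵀ * A + B * Bᵀ).mulVec v = 0 := by rw [h]; simp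
    rw [Matrix.add_mulVec, dotProduct_add, ← Matrix.mulVec_mulVec,
      ← Matrix.mulVec_mulVec, Matrix.dotProduct_mulVec, Matrix.vecMul_transpose,
      Matrix.dotProduct_mulVec (A := B), ← Matrix.vecMul_transpose (A := Bᵀ),
      Matrix.transpose_transpose] at h0
    rw [← Matrix.mulVec_transpose] at h0
    have n1 := dp_self_nonneg (A.mulVec v)
    have n2 := dp_self_nonneg (Bᵀ.mulVec v)
    constructor
    · exact dotProduct_self_eq_zero.mp (by linarith)
    · exact dotProduct_self_eq_zero.mp (by linarith)
  · rintro ⟨h1, h2⟩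
    rw [Matrix.add_mulVec, ← Matrix.mulVec_mulVec, ← Matrix.mulVec_mulVec, h1, h2]
    simp

lemma key_rank {ι₁ ι₂ ι₃ : Type*} [Fintype ι₁] [Fintype ι₂] [Fintype ι₃]
    [DecidableEq ι₂]
    (A : Matrix ι₃ ι₂ ℝ) (B : Matrix ι₂ ι₁ ℝ) (hAB : A * B = 0) :
    Module.finrank ℝ (LinearMap.ker (Aᵀ * A + B * Bᵀ).mulVecLin) + A.rank + B.rank
      = Fintype.card ι₂ := by
  classical
  set K := LinearMap.ker A.mulVecLin with hK
  have hBK : LinearMap.range B.mulVecLin ≤ K := by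
    rintro _ ⟨w, rfl⟩
    simp only [hK, LinearMap.mem_ker, Matrix.mulVecLin_apply, Matrix.mulVec_mulVec, hAB]
    simp
  set φ := (Bᵀ.mulVecLin).domRestrict K with hφ
  have hrange : LinearMap.range φ = Submodule.map Bᵀ.mulVecLin K :=
    LinearMap.range_domRestrict K _
  have hr1 : Module.finrank ℝ (LinearMap.range φ) = B.rank := by
    rw [hrange]
    apply le_antisymm
    · calc Module.finrank ℝ (Submodule.map Bᵀ.mulVecLin K)
          ≤ Module.finrank ℝ (LinearMap.range Bᵀ.mulVecLin) :=
            Submodule.finrank_mono LinearMap.map_le_range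
        _ = B.rank := by rw [← Matrix.rank_transpose B]; rfl
    · have h2 : LinearMap.range (Bᵀ * B).mulVecLin ≤ Submodule.map Bᵀ.mulVecLin K := by
        rw [Matrix.mulVecLin_mul, LinearMap.range_comp]
        exact Submodule.map_mono hBK
      calc B.rank = (Bᵀ * B).rank := (Matrix.rank_transpose_mul_self B).symm
        _ ≤ Module.finrank ℝ (Submodule.map Bᵀ.mulVecLin K) := Submodule.finrank_mono h2
  have hker : Module.finrank ℝ (LinearMap.ker φ)
      = Module.finrank ℝ (K ⊓ LinearMap.ker Bᵀ.mulVecLin : Submodule ℝ (ι₂ → ℝ)) := by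
    rw [hφ, LinearMap.ker_domRestrict,
      ← Submodule.finrank_map_subtype_eq K, Submodule.map_comap_subtype]
  have hrn1 := LinearMap.finrank_range_add_finrank_ker φ
  rw [hr1, hker] at hrn1
  have hrn2 := LinearMap.finrank_range_add_finrank_ker A.mulVecLin
  have hA : Module.finrank ℝ (LinearMap.range A.mulVecLin) = A.rank := rfl
  have hcard : Module.finrank ℝ (ι₂ → ℝ) = Fintype.card ι₂ := by
    simp [Module.finrank_pi]
  rw [hA, hcard, ← hK] at hrn2
  rw [ker_sum_psd, ← hK]
  omega

lemma bVec_zero {G : Finset (Finset ℕ)} (hG : IsComplex G) :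
    bVec G 0 + (Amat G 0).rank = fVec G 0 := by
  have h := key_rank (Amat G 0)
    (0 : Matrix {x // x ∈ G.filter fun s => s.card = 0 + 1}
      {x // x ∈ G.filter fun s => s.card = 0 + 1} ℝ) (by simp)
  rw [Matrix.rank_zero] at h
  have hfb : (Amat G 0)ᵀ * Amat G 0 + 0 * (0 : Matrix _ _ ℝ)ᵀ = formBlock G 0 := by
    rw [formBlock_zero hG]; simp
  rw [hfb] at h
  rw [bVec, fVec]
  rw [Fintype.card_coe] at h
  omega

lemma bVec_succ {G : Finset (Finset ℕ)} (hG : IsComplex G) (k : ℕ) :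
    bVec G (k + 1) + (Amat G (k + 1)).rank + (Amat G k).rank = fVec G (k + 1) := by
  have h := key_rank (Amat G (k + 1)) (Amat G k) (Amat_mul_Amat hG k)
  have hfb : (Amat G (k + 1))ᵀ * Amat G (k + 1) + Amat G k * (Amat G k)ᵀ
      = formBlock G (k + 1) := (formBlock_succ hG k).symm
  rw [hfb, Fintype.card_coe] at h
  exact h

/-- **Euler–Poincaré formula**: `Σ_k (-1)^k f_k = Σ_k (-1)^k b_k`. -/
theorem euler_poincare (G : Finset (Finset ℕ)) (hG : IsComplex G) :
    ∑ k ∈ Finset.range (G.sup Finset.card), (-1 : ℤ) ^ k * (fVec G k : ℤ) =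
      ∑ k ∈ Finset.range (G.sup Finset.card), (-1 : ℤ) ^ k * (bVec G k : ℤ) := by
  classical
  set m := G.sup Finset.card with hm
  set R : ℕ → ℤ := fun k => ((Amat G k).rank : ℤ) with hR
  set P : ℕ → ℤ := fun k => match k with | 0 => 0 | j + 1 => R j with hP
  have hk : ∀ k, (fVec G k : ℤ) - (bVec G k : ℤ) = R k + P k := by
    intro k
    cases k with
    | zero =>
      have := bVec_zero hG
      simp only [hP, hR]
      push_cast [← this]
      ring
    | succ j =>
      have := bVec_succ hG j
      simp only [hP, hR]
      push_cast [← this]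
      ring
  have tele : ∀ n, ∑ k ∈ Finset.range n, (-1 : ℤ) ^ k * (R k + P k)
      = if n = 0 then 0 else (-1) ^ (n - 1) * R (n - 1) := by
    intro n
    induction n with
    | zero => simp
    | succ n ih =>
      rw [Finset.sum_range_succ, ih]
      cases n with
      | zero => simp [hP]
      | succ j =>
        simp only [Nat.succ_ne_zero, if_false, Nat.add_sub_cancel]
        show (-1 : ℤ) ^ j * R j + (-1) ^ (j + 1) * (R (j + 1) + R j) = _
        rw [pow_succ]
        ring
  have hdiff : ∑ k ∈ Finset.range m, (-1 : ℤ) ^ k * (fVec G k : ℤ)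
      - ∑ k ∈ Finset.range m, (-1 : ℤ) ^ k * (bVec G k : ℤ)
      = ∑ k ∈ Finset.range m, (-1 : ℤ) ^ k * (R k + P k) := by
    rw [← Finset.sum_sub_distrib]
    apply Finset.sum_congr rfl
    intro k _
    rw [← mul_sub, hk k]
  rw [tele m] at hdiff
  rcases Nat.eq_zero_or_pos m with h0 | hpos
  · rw [h0]
    simp
  · have hmn : m ≠ 0 := Nat.pos_iff_ne_zero.mp hpos
    rw [if_neg hmn] at hdiff
    obtain ⟨j, hmj⟩ : ∃ j, m = j + 1 := ⟨m - 1, (Nat.succ_pred_eq_of_pos hpos).symm⟩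
    have hsup : G.sup Finset.card = j + 1 := by rw [← hm, hmj]
    have hempty : (G.filter fun s => s.card = (j + 1) + 1) = ∅ := by
      rw [Finset.filter_eq_empty_iff]
      intro x hx
      have := Finset.le_sup (f := Finset.card) hx
      omega
    have hrank0 : (Amat G j).rank = 0 := by
      have hle := Matrix.rank_le_card_height (Amat G j)
      rw [Fintype.card_coe] at hle
      have hc0 : (G.filter fun s => s.card = (j + 1) + 1).card = 0 := by
        rw [hempty]; rfl
      omega
    have hRj : R j = 0 := by simp [hR, hrank0]
    rw [hmj] at hdiff ⊢
    simp only [Nat.add_sub_cancel, hRj, mul_zero] at hdiff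
    linarith [hdiff]
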